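/- Let I be a finite index set, m ∈ ℕ, and M ⊆ {h ∈ ℕ_0^I : Σ_i h(i) ≤ m} a set of histograms. Fix any h ∈ M. For an indexed collection of operators H = (H_{i,t})_{i ∈ I, t ∈ [m]} on a fixed finite-dimensional vector space and a word i⃗ = (i_1, …, i_k), write H(i⃗) = H_{i_1,1}⋯H_{i_k,k}; for a set M' of histograms write H[M'] = Σ_{words i⃗ with histogram in M'} H(i⃗). For ω ∈ {0,…,m}^I let H_ω denote the weighted collection (2^{ω_i} H_{i,t}). Then H[{h}] lies in the linear span of { H_ω[M] : ω ∈ {0,…,m}^I }. -/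
import Mathlib


/- STATEMENT 8: the histogram span lemma.  `H[{h}]` lies in the span of the weighted sums
`H_ω[M]`, `ω ∈ {0,…,m}^I`. -/

variable {I : Type*} [Fintype I] [DecidableEq I] {A : Type*} [Ring A] [Algebra ℂ A]

/-- The histogram of the word `f : Fin k → I`. -/
def hist {k : ℕ} (f : Fin k → I) : I → ℕ :=
  fun i => (Finset.univ.filter fun t => f t = i).card

/-- `H[M] = Σ_{words i⃗ with histogram in M} H_{i_1,1} ⋯ H_{i_k,k}`, summed over all
words of length at most `m`. -/
noncomputable def wordSum (Op : I → ℕ → A) (m : ℕ) (M : Finset (I → ℕ)) : A :=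
  ∑ k ∈ Finset.range (m + 1), ∑ f : Fin k → I,
    if hist f ∈ M then (List.ofFn fun t : Fin k => Op (f t) (t : ℕ)).prod else 0

private lemma ofFn_smul_prod : ∀ (k : ℕ) (c : Fin k → ℂ) (a : Fin k → A),
    (List.ofFn fun t => c t • a t).prod = (∏ t, c t) • (List.ofFn a).prod := by
  intro k
  induction k with
  | zero => intro c a; simp
  | succ n ih =>
    intro c a
    rw [List.ofFn_succ, List.ofFn_succ, List.prod_cons, List.prod_cons,
      ih (fun t => c t.succ) (fun t => a t.succ), Fin.prod_univ_succ,
      smul_mul_assoc, mul_smul_comm, smul_smul]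

private lemma prod_pow_hist {k : ℕ} (f : Fin k → I) (ω : I → ℕ) :
    (∏ t : Fin k, (2 : ℂ) ^ (ω (f t))) = ∏ i, ((2 : ℂ) ^ (ω i)) ^ (hist f i) := by
  rw [← Finset.prod_fiberwise Finset.univ f (fun t => (2 : ℂ) ^ (ω (f t)))]
  refine Finset.prod_congr rfl fun i _ => ?_
  rw [Finset.prod_congr rfl (fun t ht => ?_), Finset.prod_const, hist]
  rw [(Finset.mem_filter.mp ht).2]

/-- `H_ω[M] = Σ_{g ∈ M} (Π_i (2^{ω i})^{g i}) • H[{g}]`. -/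
private lemma wordSum_weight (Op : I → ℕ → A) (m : ℕ) (M : Finset (I → ℕ))
    (ω : I → Fin (m + 1)) :
    wordSum (fun i t => ((2 : ℂ) ^ (ω i : ℕ)) • Op i t) m M
      = ∑ g ∈ M, (∏ i, ((2 : ℂ) ^ (ω i : ℕ)) ^ (g i)) • wordSum Op m {g} := by
  unfold wordSum
  simp_rw [Finset.smul_sum]
  rw [Finset.sum_comm]
  refine Finset.sum_congr rfl fun k _ => ?_
  rw [Finset.sum_comm]
  refine Finset.sum_congr rfl fun f _ => ?_
  rw [ofFn_smul_prod k (fun t => (2 : ℂ) ^ (ω (f t) : ℕ)) (fun t => Op (f t) (t : ℕ)),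
    prod_pow_hist f (fun i => (ω i : ℕ))]
  simp only [Finset.mem_singleton, smul_ite, smul_zero]
  exact (Finset.sum_ite_eq M (hist f)
    (fun g => (∏ i, ((2 : ℂ) ^ (ω i : ℕ)) ^ (g i)) •
      (List.ofFn fun t : Fin k => Op (f t) (t : ℕ)).prod)).symm

theorem stmt8 (Op : I → ℕ → A) (m : ℕ) (M : Finset (I → ℕ))
    (hM : ∀ g ∈ M, ∑ i, g i ≤ m) (h : I → ℕ) (hh : h ∈ M) :
    wordSum Op m {h} ∈ Submodule.span ℂ
      {x : A | ∃ ω : I → Fin (m + 1),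
        x = wordSum (fun i t => ((2 : ℂ) ^ (ω i : ℕ)) • Op i t) m M} := by
  classical
  -- node function and Lagrange basis polynomials
  set v : ℕ → ℂ := fun n => (2 : ℂ) ^ n with hv
  have hvinj : Function.Injective v := by
    intro a b hab
    have : ((2 ^ a : ℕ) : ℂ) = ((2 ^ b : ℕ) : ℂ) := by push_cast; exact hab
    exact Nat.pow_right_injective le_rfl (Nat.cast_injective this)
  have hle : ∀ g ∈ M, ∀ i, g i ≤ m := fun g hg i =>
    le_trans (Finset.single_le_sum (f := g) (fun j _ => Nat.zero_le _) (Finset.mem_univ i))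
      (hM g hg)
  set s : Finset ℕ := Finset.range (m + 1) with hs
  have hvs : Set.InjOn v s := fun a _ b _ hab => hvinj hab
  set P : I → Polynomial ℂ := fun i => Lagrange.basis s v (h i) with hP
  have hhs : ∀ i, h i ∈ s := fun i => Finset.mem_range.mpr (Nat.lt_succ_of_le (hle h hh i))
  have hdeg : ∀ i, (P i).natDegree < m + 1 := by
    intro i
    rw [hP, Lagrange.natDegree_basis hvs (hhs i), hs, Finset.card_range]
    omega
  set c : (I → Fin (m + 1)) → ℂ := fun ω => ∏ i, (P i).coeff (ω i) with hc
  -- the interpolation identity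
  have key : ∀ g ∈ M,
      (∑ ω : I → Fin (m + 1), c ω * ∏ i, ((2 : ℂ) ^ (ω i : ℕ)) ^ (g i))
        = if g = h then 1 else 0 := by
    intro g hg
    have step1 : (∑ ω : I → Fin (m + 1), c ω * ∏ i, ((2 : ℂ) ^ (ω i : ℕ)) ^ (g i))
        = ∏ i, ∑ n : Fin (m + 1), (P i).coeff n * (v (g i)) ^ (n : ℕ) := by
      rw [Fintype.prod_sum (fun i (n : Fin (m + 1)) => (P i).coeff n * (v (g i)) ^ (n : ℕ))]
      refine Finset.sum_congr rfl fun ω _ => ?_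
      rw [hc, ← Finset.prod_mul_distrib]
      refine Finset.prod_congr rfl fun i _ => ?_
      rw [hv]
      ring
    have step2 : ∀ i, (∑ n : Fin (m + 1), (P i).coeff n * (v (g i)) ^ (n : ℕ))
        = (P i).eval (v (g i)) := by
      intro i
      rw [Polynomial.eval_eq_sum_range' (hdeg i), Fin.sum_univ_eq_sum_range
        (fun n => (P i).coeff n * (v (g i)) ^ n)]
    have step3 : ∀ i, (P i).eval (v (g i)) = if h i = g i then 1 else 0 := by
      intro i
      have hgs : g i ∈ s := Finset.mem_range.mpr (Nat.lt_succ_of_le (hle g hg i))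
      by_cases hgh : h i = g i
      · rw [if_pos hgh, hP, ← hgh]
        exact Lagrange.eval_basis_self hvs (hhs i)
      · rw [if_neg hgh, hP]
        exact Lagrange.eval_basis_of_ne hgh hgs
    rw [step1, Finset.prod_congr rfl fun i _ => (step2 i).trans (step3 i)]
    by_cases hgh : g = h
    · subst hgh; simp
    · obtain ⟨i, hi⟩ : ∃ i, h i ≠ g i := by
        by_contra hcon
        push_neg at hcon
        exact hgh (funext fun i => (hcon i).symm)
      rw [if_neg hgh]
      exact Finset.prod_eq_zero (Finset.mem_univ i) (if_neg hi)
  -- assemble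
  have hsum : wordSum Op m {h}
      = ∑ ω : I → Fin (m + 1),
          c ω • wordSum (fun i t => ((2 : ℂ) ^ (ω i : ℕ)) • Op i t) m M := by
    have : (∑ ω : I → Fin (m + 1),
          c ω • wordSum (fun i t => ((2 : ℂ) ^ (ω i : ℕ)) • Op i t) m M)
        = ∑ g ∈ M, (if g = h then (1 : ℂ) else 0) • wordSum Op m {g} := by
      simp_rw [wordSum_weight, Finset.smul_sum, smul_smul]
      rw [Finset.sum_comm]
      refine Finset.sum_congr rfl fun g hg => ?_
      rw [← Finset.sum_smul, key g hg]
    rw [this]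
    simp only [ite_smul, one_smul, zero_smul]
    rw [Finset.sum_ite_eq' M h (fun g => wordSum Op m {g}), if_pos hh]
  rw [hsum]
  refine Submodule.sum_mem _ fun ω _ => Submodule.smul_mem _ _ ?_
  exact Submodule.subset_span ⟨ω, rfl⟩
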